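/- Let h be a Gamma random variable with integer shape μ ≥ 1 and scale 1/μ (so E[h] = 1), and let η = μ·(μ!)^{−1/μ}. Then for every t ≥ 0, P(h > t) ≤ Σ_{ξ=1}^{μ} (−1)^{ξ+1} C(μ,ξ) exp(−η ξ t), i.e., 1 − (1 − e^{−ηt})^{μ} ≥ P(h > t). -/

import Mathlib

open Real MeasureTheory ProbabilityTheory Set Filter Topology

namespace AlzerAux

noncomputable def phi (x : ℝ) : ℝ := x⁻¹ - (Real.exp x - 1)⁻¹

lemma exp_sub_one_pos {x : ℝ} (hx : 0 < x) : 0 < Real.exp x - 1 :=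
  sub_pos.2 (Real.one_lt_exp_iff.2 hx)

lemma hasDerivAt_phi {x : ℝ} (hx : 0 < x) :
    HasDerivAt phi (-(x ^ 2)⁻¹ - -(Real.exp x) / (Real.exp x - 1) ^ 2) x := by
  have h1 : Real.exp x - 1 ≠ 0 := (exp_sub_one_pos hx).ne'
  have d1 : HasDerivAt (fun y : ℝ => y⁻¹) (-(x ^ 2)⁻¹) x := hasDerivAt_inv hx.ne'
  have d2 : HasDerivAt (fun y : ℝ => (Real.exp y - 1)⁻¹)
      (-(Real.exp x) / (Real.exp x - 1) ^ 2) x :=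
    ((Real.hasDerivAt_exp x).sub_const 1).inv h1
  exact d1.sub d2

lemma key_exp_ineq {x : ℝ} (hx : 0 < x) : Real.exp x * x ^ 2 ≤ (Real.exp x - 1) ^ 2 := by
  set a := Real.exp (x / 2) with ha
  have hap : 0 < a := Real.exp_pos _
  have haa : a * a = Real.exp x := by
    rw [ha, ← Real.exp_add]; ring_nf
  have hsinh : x / 2 ≤ Real.sinh (x / 2) := Real.self_le_sinh_iff.2 (by linarith)
  have hs : Real.sinh (x / 2) = (a - a⁻¹) / 2 := by
    rw [Real.sinh_eq, Real.exp_neg]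
  have hx' : x ≤ a - a⁻¹ := by rw [hs] at hsinh; linarith
  have hinv : a * a⁻¹ = 1 := mul_inv_cancel₀ hap.ne'
  have h2 : Real.exp x - 1 = a * (a - a⁻¹) := by
    rw [← haa]; field_simp
  rw [h2, ← haa, mul_pow]
  have h3 : x ^ 2 ≤ (a - a⁻¹) ^ 2 := by
    have h0 : 0 ≤ x := hx.le
    nlinarith
  nlinarith [sq_nonneg x, mul_pos hap hap]

lemma deriv_phi_nonpos {x : ℝ} (hx : 0 < x) :
    -(x ^ 2)⁻¹ - -(Real.exp x) / (Real.exp x - 1) ^ 2 ≤ 0 := by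
  have h1 : 0 < Real.exp x - 1 := exp_sub_one_pos hx
  have h2 : Real.exp x * x ^ 2 ≤ (Real.exp x - 1) ^ 2 := key_exp_ineq hx
  have h3 : Real.exp x / (Real.exp x - 1) ^ 2 ≤ 1 / x ^ 2 := by
    rw [div_le_div_iff₀ (by positivity) (by positivity)]; nlinarith
  have h4 : (x ^ 2)⁻¹ = 1 / x ^ 2 := inv_eq_one_div _
  rw [neg_div]
  linarith

lemma phi_antitoneOn : AntitoneOn phi (Set.Ioi 0) := by
  have hi : interior (Set.Ioi (0:ℝ)) = Set.Ioi 0 := interior_Ioi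
  refine antitoneOn_of_deriv_nonpos (convex_Ioi 0) ?_ ?_ ?_
  · intro x hx
    exact ((hasDerivAt_phi hx).continuousAt).continuousWithinAt
  · rw [hi]; intro x hx
    exact (hasDerivAt_phi hx).differentiableAt.differentiableWithinAt
  · rw [hi]; intro x hx
    rw [(hasDerivAt_phi hx).deriv]
    exact deriv_phi_nonpos hx

noncomputable def fp (m : ℕ) (x : ℝ) : ℝ :=
  (m : ℝ) ^ m / (m - 1).factorial * x ^ (m - 1) * Real.exp (-(m * x))

noncomputable def Hf (η : ℝ) (m : ℕ) (t : ℝ) : ℝ := (1 - Real.exp (-(η * t))) ^ m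

noncomputable def hp (η : ℝ) (m : ℕ) (t : ℝ) : ℝ :=
  (m : ℝ) * η * Real.exp (-(η * t)) * (1 - Real.exp (-(η * t))) ^ (m - 1)

noncomputable def gf (η : ℝ) (m : ℕ) (t : ℝ) : ℝ :=
  ((m : ℝ) - 1) * (Real.log (η * t) - Real.log (1 - Real.exp (-(η * t)))) + (η - m) * t

noncomputable def gd (η : ℝ) (m : ℕ) (t : ℝ) : ℝ :=
  ((m : ℝ) - 1) * (1 / t - η * Real.exp (-(η * t)) / (1 - Real.exp (-(η * t)))) + (η - m)

variable {η : ℝ} {m : ℕ}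

lemma one_sub_exp_pos (hη : 0 < η) {t : ℝ} (ht : 0 < t) : 0 < 1 - Real.exp (-(η * t)) := by
  have : -(η * t) < 0 := by nlinarith
  have h2 : Real.exp (-(η * t)) < 1 := Real.exp_lt_one_iff.2 this
  linarith

lemma hasDerivAt_inner (η : ℝ) (t : ℝ) :
    HasDerivAt (fun u : ℝ => 1 - Real.exp (-(η * u))) (η * Real.exp (-(η * t))) t := by
  have d1 : HasDerivAt (fun u : ℝ => -(η * u)) (-η) t := by
    simpa using ((hasDerivAt_id t).const_mul η).fun_neg
  have d2 := d1.exp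
  have d3 := d2.const_sub 1
  refine d3.congr_deriv ?_; ring

lemma hasDerivAt_Hf (η : ℝ) (m : ℕ) (t : ℝ) :
    HasDerivAt (Hf η m) (hp η m t) t := by
  have := (hasDerivAt_inner η t).pow m
  refine this.congr_deriv ?_
  unfold hp; ring

lemma hasDerivAt_gf (hη : 0 < η) {t : ℝ} (ht : 0 < t) :
    HasDerivAt (gf η m) (gd η m t) t := by
  have hηt : η * t ≠ 0 := by positivity
  have h1 : (0:ℝ) < 1 - Real.exp (-(η * t)) := one_sub_exp_pos hη ht
  have d1 : HasDerivAt (fun u : ℝ => Real.log (η * u)) (1 / t) t := by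
    have := (((hasDerivAt_id t).const_mul η).log hηt)
    refine this.congr_deriv ?_
    rw [id, mul_one, div_mul_cancel_left₀ hη.ne', one_div]
  have d2 : HasDerivAt (fun u : ℝ => Real.log (1 - Real.exp (-(η * u))))
      (η * Real.exp (-(η * t)) / (1 - Real.exp (-(η * t)))) t :=
    (hasDerivAt_inner η t).log h1.ne'
  have d3 := ((d1.sub d2).const_mul ((m:ℝ) - 1)).add ((hasDerivAt_id t).const_mul (η - (m:ℝ)))
  refine d3.congr_deriv ?_
  unfold gd; ring


lemma gd_eq_phi (hη : 0 < η) (hm : 1 ≤ m) {t : ℝ} (ht : 0 < t) :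
    gd η m t = ((m : ℝ) - 1) * η * phi (η * t) + (η - m) := by
  have hηt : (0:ℝ) < η * t := by positivity
  have h1 : (0:ℝ) < 1 - Real.exp (-(η * t)) := one_sub_exp_pos hη ht
  have hE : Real.exp (η * t) ≠ 0 := (Real.exp_pos _).ne'
  have h2 : 0 < Real.exp (η * t) - 1 := exp_sub_one_pos hηt
  unfold gd phi
  have key : η * Real.exp (-(η * t)) / (1 - Real.exp (-(η * t)))
      = η / (Real.exp (η * t) - 1) := by
    rw [Real.exp_neg]
    field_simp
  rw [key]
  field_simp

lemma gd_antitoneOn (hη : 0 < η) (hm : 1 ≤ m) : AntitoneOn (gd η m) (Set.Ioi 0) := by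
  intro s hs t ht hst
  rw [Set.mem_Ioi] at hs ht
  rw [gd_eq_phi hη hm hs, gd_eq_phi hη hm ht]
  have hcoef : (0:ℝ) ≤ ((m:ℝ) - 1) * η := by
    have : (1:ℝ) ≤ (m:ℝ) := by exact_mod_cast hm
    nlinarith
  have hphi : phi (η * t) ≤ phi (η * s) :=
    phi_antitoneOn (by simp only [Set.mem_Ioi]; positivity) (by simp only [Set.mem_Ioi]; positivity)
      (by nlinarith)
  nlinarith

lemma gf_tendsto_zero (hη : 0 < η) :
    Filter.Tendsto (gf η m) (nhdsWithin 0 (Set.Ioi 0)) (nhds 0) := by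
  have hd : HasDerivAt (fun u : ℝ => 1 - Real.exp (-(η * u))) η 0 := by
    simpa using hasDerivAt_inner η 0
  have hslope := hasDerivAt_iff_tendsto_slope.1 hd
  have hmono : nhdsWithin (0:ℝ) (Set.Ioi 0) ≤ nhdsWithin 0 {0}ᶜ :=
    nhdsWithin_mono 0 (fun x hx => by simpa using (ne_of_gt hx))
  have hslope' : Filter.Tendsto (fun t : ℝ => (1 - Real.exp (-(η * t))) / (η * t))
      (nhdsWithin 0 (Set.Ioi 0)) (nhds 1) := by
    have h1 : Filter.Tendsto (fun t : ℝ => (1 - Real.exp (-(η * t))) / t)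
        (nhdsWithin 0 (Set.Ioi 0)) (nhds η) := by
      refine Filter.Tendsto.congr' ?_ ((hslope.mono_left hmono))
      filter_upwards [self_mem_nhdsWithin] with t (ht : t ∈ Set.Ioi (0:ℝ))
      simp [slope_def_field]
    have h2 := h1.div_const η
    rw [div_self hη.ne'] at h2
    refine h2.congr fun t => ?_
    rw [div_div, mul_comm t η]
  have hlog : Filter.Tendsto (fun t : ℝ => Real.log ((1 - Real.exp (-(η * t))) / (η * t)))
      (nhdsWithin 0 (Set.Ioi 0)) (nhds 0) := by
    have := (Real.continuousAt_log one_ne_zero).tendsto.comp hslope'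
    simpa [Function.comp_def] using this
  have hlin : Filter.Tendsto (fun t : ℝ => (η - (m:ℝ)) * t)
      (nhdsWithin 0 (Set.Ioi 0)) (nhds 0) := by
    have hc : Continuous fun t : ℝ => (η - (m:ℝ)) * t := continuous_const.mul continuous_id
    have := (hc.tendsto (0:ℝ)).mono_left (nhdsWithin_le_nhds (s := Set.Ioi (0:ℝ)))
    simpa using this
  have hmain : Filter.Tendsto (fun t : ℝ => ((m:ℝ) - 1) *
      (-Real.log ((1 - Real.exp (-(η * t))) / (η * t))) + (η - m) * t)
      (nhdsWithin 0 (Set.Ioi 0)) (nhds 0) := by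
    have := (hlog.neg.const_mul ((m:ℝ) - 1)).add hlin
    simpa using this
  refine hmain.congr' ?_
  filter_upwards [self_mem_nhdsWithin] with t (ht : t ∈ Set.Ioi (0:ℝ))
  rw [Set.mem_Ioi] at ht
  have h1 : (0:ℝ) < 1 - Real.exp (-(η * t)) := one_sub_exp_pos hη ht
  have h2 : (0:ℝ) < η * t := by positivity
  unfold gf
  rw [Real.log_div h1.ne' h2.ne']
  ring

lemma fh (hη : 0 < η) (hm : 1 ≤ m) (hpow : η ^ m = (m:ℝ) ^ m / m.factorial)
    {t : ℝ} (ht : 0 < t) : fp m t = hp η m t * Real.exp (gf η m t) := by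
  have h1 : (0:ℝ) < 1 - Real.exp (-(η * t)) := one_sub_exp_pos hη ht
  have hηt : (0:ℝ) < η * t := by positivity
  have hmpos : 0 < m := hm
  have hcast : ((m:ℝ) - 1) = ((m - 1 : ℕ) : ℝ) := by
    have := Nat.cast_sub hm (R := ℝ)
    simp at this
    linarith
  have hexp : Real.exp (gf η m t)
      = ((η * t) / (1 - Real.exp (-(η * t)))) ^ (m - 1) * Real.exp ((η - m) * t) := by
    unfold gf
    rw [hcast, Real.exp_add, Real.exp_nat_mul, Real.exp_sub, Real.exp_log hηt,
      Real.exp_log h1]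
  have hfac2 : (m.factorial : ℝ) = (m : ℝ) * ((m - 1).factorial : ℝ) := by
    exact_mod_cast (Nat.mul_factorial_pred hmpos.ne').symm
  have hfacne : ((m - 1).factorial : ℝ) ≠ 0 := by positivity
  have hfac : (m : ℝ) * η ^ m = (m : ℝ) ^ m / ((m - 1).factorial : ℝ) := by
    rw [hpow, hfac2]
    have hmne : (m : ℝ) ≠ 0 := by positivity
    field_simp
  have hpowsucc : η ^ m = η ^ (m - 1) * η := by
    conv_lhs => rw [← Nat.succ_pred_eq_of_pos hmpos]
    rw [pow_succ, Nat.pred_eq_sub_one]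
  have hmul : Real.exp (-(η * t)) * Real.exp ((η - m) * t) = Real.exp (-(m * t)) := by
    rw [← Real.exp_add]
    ring_nf
  rw [hexp]
  unfold fp hp
  rw [div_pow, mul_pow, ← hfac, hpowsucc]
  field_simp
  have hmul' : Real.exp (-(η * t)) * Real.exp (t * (η - m)) = Real.exp (-(m * t)) := by
    rw [mul_comm t]; exact hmul
  linear_combination (-1 : ℝ) * hmul'

lemma gf_continuousOn (hη : 0 < η) {a b : ℝ} (ha : 0 < a) :
    ContinuousOn (gf η m) (Set.Icc a b) := by
  intro x hx
  have hx0 : 0 < x := lt_of_lt_of_le ha hx.1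
  exact ((hasDerivAt_gf hη hx0).continuousAt).continuousWithinAt

lemma gf_ge_mul_gd (hη : 0 < η) (hm : 1 ≤ m) {s : ℝ} (hs : 0 < s) :
    s * gd η m s ≤ gf η m s := by
  have hev : ∀ᶠ ε in nhdsWithin (0:ℝ) (Set.Ioi 0),
      gf η m ε ≤ gf η m s - (s - ε) * gd η m s := by
    filter_upwards [Ioo_mem_nhdsGT_of_mem (by constructor <;> [rfl; exact hs] : (0:ℝ) ∈ Set.Ico 0 s)]
      with ε hε
    obtain ⟨hε0, hεs⟩ := hε
    obtain ⟨c, hc, hceq⟩ := exists_hasDerivAt_eq_slope (gf η m) (gd η m) hεs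
      (gf_continuousOn hη hε0)
      (fun x hx => hasDerivAt_gf hη (lt_trans hε0 hx.1))
    have hgd : gd η m s ≤ gd η m c :=
      gd_antitoneOn hη hm (Set.mem_Ioi.2 (lt_trans hε0 hc.1)) (Set.mem_Ioi.2 hs) hc.2.le
    have hslope : (gf η m s - gf η m ε) / (s - ε) = gd η m c := hceq.symm
    have hsε : 0 < s - ε := by linarith
    rw [div_eq_iff hsε.ne'] at hslope
    nlinarith
  have htend : Filter.Tendsto (fun ε : ℝ => gf η m s - (s - ε) * gd η m s)
      (nhdsWithin (0:ℝ) (Set.Ioi 0)) (nhds (gf η m s - s * gd η m s)) := by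
    have : Filter.Tendsto (fun ε : ℝ => gf η m s - (s - ε) * gd η m s) (nhds 0)
        (nhds (gf η m s - (s - 0) * gd η m s)) := by
      apply Continuous.tendsto
      continuity
    simp only [sub_zero] at this
    exact this.mono_left nhdsWithin_le_nhds
  have h0 : (0:ℝ) ≤ gf η m s - s * gd η m s :=
    le_of_tendsto_of_tendsto (gf_tendsto_zero (m := m) hη) htend hev
  linarith


lemma slope_key (hη : 0 < η) (hm : 1 ≤ m) {s t : ℝ} (hs : 0 < s) (hst : s ≤ t) :
    s * gf η m t ≤ t * gf η m s := by
  rcases eq_or_lt_of_le hst with rfl | hlt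
  · exact le_rfl
  have ht : 0 < t := lt_trans hs hlt
  obtain ⟨c, hc, hceq⟩ := exists_hasDerivAt_eq_slope (gf η m) (gd η m) hlt
    (gf_continuousOn hη hs)
    (fun x hx => hasDerivAt_gf hη (lt_trans hs hx.1))
  have hgd : gd η m c ≤ gd η m s :=
    gd_antitoneOn hη hm (Set.mem_Ioi.2 hs) (Set.mem_Ioi.2 (lt_trans hs hc.1)) hc.1.le
  have hslope : gf η m t - gf η m s = (t - s) * gd η m c := by
    rw [hceq, mul_div_assoc', mul_comm, mul_div_assoc, div_self (by linarith : t - s ≠ 0), mul_one]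
  have hkey : s * gd η m s ≤ gf η m s := gf_ge_mul_gd hη hm hs
  have hts : 0 < t - s := by linarith
  -- s * gf t = s * gf s + s*(t-s)*gd c ≤ s gf s + s (t-s) gd s ≤ s gf s + (t-s) gf s = t gf s
  have h1 : s * gf η m t = s * gf η m s + s * ((t - s) * gd η m c) := by
    nlinarith [hslope]
  nlinarith [mul_le_mul_of_nonneg_left hgd (mul_nonneg hs.le hts.le)]

lemma sign_before (hη : 0 < η) (hm : 1 ≤ m) {s t : ℝ} (hs : 0 < s) (hst : s ≤ t)
    (hgt : 0 ≤ gf η m t) : 0 ≤ gf η m s := by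
  have ht : 0 < t := lt_of_lt_of_le hs hst
  nlinarith [slope_key hη hm hs hst]

lemma sign_after (hη : 0 < η) (hm : 1 ≤ m) {t u : ℝ} (ht : 0 < t) (htu : t ≤ u)
    (hgt : gf η m t ≤ 0) : gf η m u ≤ 0 := by
  have hu : 0 < u := lt_of_lt_of_le ht htu
  nlinarith [slope_key hη hm ht htu]

noncomputable def Ff (m : ℕ) (t : ℝ) : ℝ := ∫ x in (0:ℝ)..t, fp m x

lemma fp_continuous : Continuous (fp m) := by
  unfold fp
  fun_prop

lemma fp_nonneg (hm : 1 ≤ m) {x : ℝ} (hx : 0 ≤ x) : 0 ≤ fp m x := by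
  unfold fp
  positivity

lemma hp_nonneg (hη : 0 < η) {x : ℝ} (hx : 0 < x) : 0 ≤ hp η m x := by
  have h1 := one_sub_exp_pos hη hx
  unfold hp
  positivity

lemma hasDerivAt_Ff (m : ℕ) (t : ℝ) : HasDerivAt (Ff m) (fp m t) t :=
  intervalIntegral.integral_hasDerivAt_right
    ((fp_continuous (m := m)).intervalIntegrable 0 t)
    ((fp_continuous (m := m)).stronglyMeasurableAtFilter volume (nhds t))
    (fp_continuous (m := m)).continuousAt

lemma pdfReal_eq (hm : 1 ≤ m) {x : ℝ} (hx : 0 < x) :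
    gammaPDFReal (m : ℝ) (m : ℝ) x = fp m x := by
  unfold gammaPDFReal fp
  rw [if_pos hx.le]
  have hc : ((m : ℝ) - 1) = ((m - 1 : ℕ) : ℝ) := by
    have := Nat.cast_sub hm (R := ℝ)
    simp at this
    linarith
  have hG : Real.Gamma (m : ℝ) = ((m - 1).factorial : ℝ) := by
    have h2 : (m : ℝ) = ((m - 1 : ℕ) : ℝ) + 1 := by rw [← hc]; ring
    rw [h2, Real.Gamma_nat_eq_factorial]
  rw [hc, Real.rpow_natCast, Real.rpow_natCast, hG]

lemma lintegral_fp (hm : 1 ≤ m) :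
    ∫⁻ x in Set.Ioi (0:ℝ), ENNReal.ofReal (fp m x) = 1 := by
  have hmp : (0:ℝ) < m := by exact_mod_cast hm
  have h1 := lintegral_gammaPDF_eq_one (a := (m:ℝ)) (r := (m:ℝ)) hmp hmp
  have hsplit : ∫⁻ x, gammaPDF (m:ℝ) (m:ℝ) x =
      (∫⁻ x in Set.Ioi (0:ℝ), gammaPDF (m:ℝ) (m:ℝ) x) +
      ∫⁻ x in Set.Iic (0:ℝ), gammaPDF (m:ℝ) (m:ℝ) x := by
    rw [← lintegral_add_compl (μ := volume) (gammaPDF (m:ℝ) (m:ℝ)) (measurableSet_Ioi (a := (0:ℝ)))]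
    congr 1
    · congr 1
      simp [Set.compl_Ioi]
  have hzero : ∫⁻ x in Set.Iic (0:ℝ), gammaPDF (m:ℝ) (m:ℝ) x = 0 := by
    rw [← MeasureTheory.setLIntegral_congr (MeasureTheory.Iio_ae_eq_Iic (a := (0:ℝ)))]
    exact lintegral_gammaPDF_of_nonpos le_rfl
  have hcongr : ∫⁻ x in Set.Ioi (0:ℝ), gammaPDF (m:ℝ) (m:ℝ) x
      = ∫⁻ x in Set.Ioi (0:ℝ), ENNReal.ofReal (fp m x) := by
    apply MeasureTheory.setLIntegral_congr_fun (measurableSet_Ioi)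
    exact fun x hx => by
      rw [gammaPDF, pdfReal_eq hm hx]
  rw [hsplit, hzero, add_zero, hcongr] at h1
  exact h1

lemma integrableOn_fp (hm : 1 ≤ m) : MeasureTheory.IntegrableOn (fp m) (Set.Ioi 0) := by
  constructor
  · exact (fp_continuous (m := m)).aestronglyMeasurable.restrict
  · rw [MeasureTheory.hasFiniteIntegral_iff_ofReal]
    · rw [lintegral_fp hm]
      exact ENNReal.one_lt_top
    · refine (MeasureTheory.ae_restrict_iff' measurableSet_Ioi).2 (MeasureTheory.ae_of_all _ ?_)
      exact fun x hx => fp_nonneg hm (le_of_lt hx)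

lemma integral_fp (hm : 1 ≤ m) : ∫ x in Set.Ioi (0:ℝ), fp m x = 1 := by
  rw [MeasureTheory.integral_eq_lintegral_of_nonneg_ae]
  · rw [lintegral_fp hm]
    simp
  · refine (MeasureTheory.ae_restrict_iff' measurableSet_Ioi).2 (MeasureTheory.ae_of_all _ ?_)
    exact fun x hx => fp_nonneg hm (le_of_lt hx)
  · exact (fp_continuous (m := m)).aestronglyMeasurable.restrict

lemma Ff_tendsto (hm : 1 ≤ m) : Filter.Tendsto (Ff m) Filter.atTop (nhds 1) := by
  have h := MeasureTheory.intervalIntegral_tendsto_integral_Ioi 0 (integrableOn_fp hm)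
    Filter.tendsto_id
  rw [integral_fp hm] at h
  exact h

lemma Hf_tendsto (hη : 0 < η) : Filter.Tendsto (Hf η m) Filter.atTop (nhds 1) := by
  have he : Filter.Tendsto (fun t : ℝ => Real.exp (-(η * t))) Filter.atTop (nhds 0) := by
    apply Real.tendsto_exp_atBot.comp
    have : Filter.Tendsto (fun t : ℝ => η * t) Filter.atTop Filter.atTop :=
      Filter.Tendsto.const_mul_atTop hη Filter.tendsto_id
    exact Filter.tendsto_neg_atTop_atBot.comp this
  have := ((tendsto_const_nhds (x := (1:ℝ)) (f := Filter.atTop)).sub he).pow m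
  simp only [sub_zero, one_pow] at this
  exact this

lemma core (hη : 0 < η) (hm : 1 ≤ m) (hpow : η ^ m = (m:ℝ) ^ m / m.factorial)
    {t : ℝ} (ht : 0 ≤ t) : Hf η m t ≤ Ff m t := by
  have hm0 : m ≠ 0 := by omega
  have hFf0 : Ff m 0 = 0 := by unfold Ff; simp
  have hHf0 : Hf η m 0 = 0 := by unfold Hf; simp [hm0]
  rcases eq_or_lt_of_le ht with rfl | htpos
  · rw [hFf0, hHf0]
  set D := fun u : ℝ => Ff m u - Hf η m u with hD
  have hDder : ∀ u : ℝ, HasDerivAt D (fp m u - hp η m u) u :=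
    fun u => (hasDerivAt_Ff m u).sub (hasDerivAt_Hf η m u)
  have hDdiff : Differentiable ℝ D := fun u => (hDder u).differentiableAt
  have hDcont : Continuous D := hDdiff.continuous
  have hgoal : 0 ≤ D t → Hf η m t ≤ Ff m t := by
    intro h; simpa [hD] using h
  apply hgoal
  by_cases hg : 0 ≤ gf η m t
  · -- D monotone on [0, t]
    have hmono : MonotoneOn D (Set.Icc 0 t) := by
      apply monotoneOn_of_deriv_nonneg (convex_Icc 0 t) hDcont.continuousOn
        (fun u _ => (hDdiff u).differentiableWithinAt)
      intro u hu
      rw [interior_Icc] at hu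
      rw [(hDder u).deriv]
      have hu0 : 0 < u := hu.1
      have hgf : 0 ≤ gf η m u := sign_before hη hm hu0 hu.2.le hg
      have hfh := fh hη hm hpow hu0
      have hexp : (1:ℝ) ≤ Real.exp (gf η m u) := Real.one_le_exp hgf
      nlinarith [hp_nonneg (m := m) hη hu0]
    have := hmono (Set.left_mem_Icc.2 ht) (Set.right_mem_Icc.2 ht) ht
    rw [hD] at this ⊢
    simp only at this ⊢
    rw [hFf0, hHf0] at this
    linarith
  · push_neg at hg
    have hanti : AntitoneOn D (Set.Ici t) := by
      apply antitoneOn_of_deriv_nonpos (convex_Ici t) hDcont.continuousOn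
        (fun u _ => (hDdiff u).differentiableWithinAt)
      intro u hu
      rw [interior_Ici] at hu
      rw [(hDder u).deriv]
      have hu0 : 0 < u := lt_trans htpos hu
      have hgf : gf η m u ≤ 0 := sign_after hη hm htpos (le_of_lt hu) hg.le
      have hfh := fh hη hm hpow hu0
      have hexp : Real.exp (gf η m u) ≤ 1 := Real.exp_le_one_iff.2 hgf
      nlinarith [hp_nonneg (m := m) hη hu0]
    have hDlim : Filter.Tendsto D Filter.atTop (nhds 0) := by
      have := (Ff_tendsto hm).sub (Hf_tendsto (m := m) hη)
      simpa using this
    refine le_of_tendsto hDlim ?_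
    filter_upwards [Filter.eventually_ge_atTop t] with u hu
    exact hanti (Set.self_mem_Ici) hu hu

lemma Hf_nonneg (hη : 0 < η) {t : ℝ} (ht : 0 ≤ t) : 0 ≤ Hf η m t := by
  have h1 : Real.exp (-(η * t)) ≤ 1 := Real.exp_le_one_iff.2 (by nlinarith)
  have h2 : (0:ℝ) ≤ 1 - Real.exp (-(η * t)) := by linarith
  unfold Hf
  exact pow_nonneg h2 m

lemma measure_Ioc (hm : 1 ≤ m) {t : ℝ} (ht : 0 ≤ t) :
    gammaMeasure (m : ℝ) (m : ℝ) (Set.Ioc 0 t) = ENNReal.ofReal (Ff m t) := by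
  rw [gammaMeasure, MeasureTheory.withDensity_apply _ measurableSet_Ioc]
  have hcongr : ∫⁻ x in Set.Ioc (0:ℝ) t, gammaPDF (m:ℝ) (m:ℝ) x
      = ∫⁻ x in Set.Ioc (0:ℝ) t, ENNReal.ofReal (fp m x) := by
    apply MeasureTheory.setLIntegral_congr_fun measurableSet_Ioc
    exact fun x hx => by
      rw [gammaPDF, pdfReal_eq hm hx.1]
  rw [hcongr, ← MeasureTheory.ofReal_integral_eq_lintegral_ofReal]
  · unfold Ff
    rw [intervalIntegral.integral_of_le ht]
  · exact (fp_continuous (m := m)).integrableOn_Ioc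
  · refine (MeasureTheory.ae_restrict_iff' measurableSet_Ioc).2 (MeasureTheory.ae_of_all _ ?_)
    exact fun x hx => fp_nonneg hm hx.1.le

lemma main_measure (hη : 0 < η) (hm : 1 ≤ m) (hpow : η ^ m = (m:ℝ) ^ m / m.factorial)
    {t : ℝ} (ht : 0 ≤ t) :
    gammaMeasure (m : ℝ) (m : ℝ) (Set.Ioi t) ≤ ENNReal.ofReal (1 - Hf η m t) := by
  have hmp : (0:ℝ) < m := by exact_mod_cast hm
  have : IsProbabilityMeasure (gammaMeasure (m : ℝ) (m : ℝ)) :=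
    isProbabilityMeasure_gammaMeasure hmp hmp
  have hcompl : gammaMeasure (m : ℝ) (m : ℝ) (Set.Ioi t)
      = 1 - gammaMeasure (m : ℝ) (m : ℝ) (Set.Iic t) := by
    rw [← Set.compl_Iic, measure_compl measurableSet_Iic (measure_ne_top _ _), measure_univ]
  have hIic : ENNReal.ofReal (Hf η m t) ≤ gammaMeasure (m : ℝ) (m : ℝ) (Set.Iic t) :=
    calc ENNReal.ofReal (Hf η m t) ≤ ENNReal.ofReal (Ff m t) :=
          ENNReal.ofReal_le_ofReal (core hη hm hpow ht)
      _ = gammaMeasure (m : ℝ) (m : ℝ) (Set.Ioc 0 t) := (measure_Ioc hm ht).symm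
      _ ≤ gammaMeasure (m : ℝ) (m : ℝ) (Set.Iic t) :=
          measure_mono Set.Ioc_subset_Iic_self
  calc gammaMeasure (m : ℝ) (m : ℝ) (Set.Ioi t)
      = 1 - gammaMeasure (m : ℝ) (m : ℝ) (Set.Iic t) := hcompl
    _ ≤ 1 - ENNReal.ofReal (Hf η m t) := tsub_le_tsub_left hIic 1
    _ = ENNReal.ofReal (1 - Hf η m t) := by
        rw [ENNReal.ofReal_sub 1 (Hf_nonneg hη ht), ENNReal.ofReal_one]

lemma binom_sum (m : ℕ) (hm : 1 ≤ m) (x : ℝ) :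
    ∑ ξ ∈ Finset.Icc 1 m, (-1 : ℝ) ^ (ξ + 1) * (m.choose ξ : ℝ) * x ^ ξ
      = 1 - (1 - x) ^ m := by
  have h := add_pow (-x) 1 m
  have hsplit : ∑ k ∈ Finset.range (m + 1), (-x) ^ k * 1 ^ (m - k) * (m.choose k : ℝ)
      = (-x) ^ 0 * 1 ^ (m - 0) * (m.choose 0 : ℝ)
        + ∑ k ∈ Finset.Icc 1 m, (-x) ^ k * 1 ^ (m - k) * (m.choose k : ℝ) := by
    rw [Finset.range_eq_Ico, Finset.sum_eq_sum_Ico_succ_bot (Nat.succ_pos m)]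
    congr 1
  rw [hsplit] at h
  simp only [pow_zero, one_pow, one_mul, mul_one, Nat.choose_zero_right, Nat.cast_one] at h
  have h2 : (1 - x) ^ m = 1 + ∑ k ∈ Finset.Icc 1 m, (-x) ^ k * (m.choose k : ℝ) := by
    rw [show (1:ℝ) - x = -x + 1 by ring]
    exact h
  have h3 : ∀ k : ℕ, (-1 : ℝ) ^ (k + 1) * (m.choose k : ℝ) * x ^ k
      = -((-x) ^ k * (m.choose k : ℝ)) := by
    intro k
    rw [neg_pow]
    ring
  rw [h2, Finset.sum_congr rfl (fun k _ => h3 k), Finset.sum_neg_distrib]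
  ring

end AlzerAux

open AlzerAux

theorem alzer_gamma_tail_bound (m : ℕ) (hm : 1 ≤ m) (t : ℝ) (ht : 0 ≤ t) :
    gammaMeasure (m : ℝ) (m : ℝ) (Set.Ioi t)
        ≤ ENNReal.ofReal (∑ ξ ∈ Finset.Icc 1 m,
            (-1 : ℝ) ^ (ξ + 1) * (m.choose ξ : ℝ) *
              Real.exp (-(m * ((m.factorial : ℝ) ^ (-(1 : ℝ) / m))) * ξ * t)) ∧
      gammaMeasure (m : ℝ) (m : ℝ) (Set.Ioi t)
        ≤ ENNReal.ofReal
            (1 - (1 - Real.exp (-(m * ((m.factorial : ℝ) ^ (-(1 : ℝ) / m))) * t)) ^ m) := by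
  have hfacpos : (0:ℝ) < (m.factorial : ℝ) := by exact_mod_cast m.factorial_pos
  have hmp : (0:ℝ) < (m : ℝ) := by exact_mod_cast hm
  set η : ℝ := (m : ℝ) * ((m.factorial : ℝ) ^ (-(1 : ℝ) / m)) with hηdef
  have hη : 0 < η := by
    rw [hηdef]
    positivity
  have hpow : η ^ m = (m:ℝ) ^ m / (m.factorial : ℝ) := by
    rw [hηdef, mul_pow, ← Real.rpow_natCast ((m.factorial : ℝ) ^ (-(1:ℝ)/m)) m,
      ← Real.rpow_mul hfacpos.le]
    have hmne : (m : ℝ) ≠ 0 := hmp.ne'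
    have he : (-(1:ℝ)/m) * (m : ℕ) = -1 := by field_simp
    rw [he, Real.rpow_neg_one, div_eq_mul_inv]
  have hbound := main_measure hη hm hpow ht
  have hHf : Hf η m t = (1 - Real.exp (-η * t)) ^ m := by
    unfold Hf
    rw [neg_mul]
  constructor
  · have hs : (∑ ξ ∈ Finset.Icc 1 m, (-1 : ℝ) ^ (ξ + 1) * (m.choose ξ : ℝ) *
        Real.exp (-η * ξ * t)) = 1 - (1 - Real.exp (-(η * t))) ^ m := by
      rw [← binom_sum m hm (Real.exp (-(η * t)))]
      apply Finset.sum_congr rfl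
      intro ξ _
      congr 1
      rw [← Real.exp_nat_mul]
      congr 1
      ring
    rw [hs]
    exact hbound
  · rw [show -η * t = -(η * t) by ring]
    exact hbound
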